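/- For the single-edge channel graph S₁ on {0,1}^2 whose unique edge joins 00 and 01 (Hamming distance 1), the capacity C_M(S₁) equals log₂((1+√5)/2); equivalently, M(S₁,n) grows like the Fibonacci numbers up to polynomial factors. -/

import Mathlib

open Filter

def bpair (x : List Bool) (i : ℕ) : Bool × Bool := (x.getD i false, x.getD (i+1) false)

/-- `S₁`-distinguishability: the unique edge of `S₁` joins `00` and `01`. -/
def S1dist (n : ℕ) (x y : List Bool) : Prop :=
  ∃ i, i + 1 < n ∧
    ((bpair x i = (false, false) ∧ bpair y i = (false, true)) ∨
     (bpair x i = (false, true) ∧ bpair y i = (false, false)))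

/-- `M(S₁, n)`: maximum size of a pairwise `S₁`-distinguishable code in `{0,1}ⁿ`. -/
noncomputable def MS1 (n : ℕ) : ℕ :=
  sSup {k : ℕ | ∃ B : Set (List Bool),
    (∀ x ∈ B, x.length = n) ∧ B.Pairwise (S1dist n) ∧ B.ncard = k}

/-! ### Auxiliary definitions -/

/-- Normal form map: state `s` records whether the current output bit may copy the input. -/
def Hf : Bool → List Bool → List Bool
  | _, [] => []
  | s, x :: l => (s && x) :: Hf (!x) l

/-- The canonical fib-sized code: words built from blocks `0` and `01`. -/
def Cn : ℕ → Finset (List Bool)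
  | 0 => {[]}
  | 1 => {[false]}
  | n + 2 => (Cn (n+1)).image (List.cons false) ∪ (Cn n).image (fun l => false :: true :: l)

theorem Hf_length (l : List Bool) : ∀ s, (Hf s l).length = l.length := by
  induction l with
  | nil => intro s; rfl
  | cons x t ih => intro s; simp [Hf, ih]

theorem Hf_getD_true (l : List Bool) : ∀ s i, (Hf s l).getD i false = true →
    l.getD i false = true := by
  induction l with
  | nil => intro s i h; simpa [Hf] using h
  | cons x t ih =>
    intro s i h
    match i with
    | 0 =>
      simp only [Hf, List.getD_cons_zero] at h ⊢
      exact (Bool.and_eq_true _ _ ▸ h).2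
    | i + 1 =>
      simp only [Hf, List.getD_cons_succ] at h ⊢
      exact ih (!x) i h

theorem Hf_getD_zero (t : List Bool) : (Hf true t).getD 0 false = t.getD 0 false := by
  cases t with
  | nil => rfl
  | cons x t => simp [Hf]

theorem Hf_getD_agree (l : List Bool) : ∀ s i, (Hf s l).getD i false = false →
    l.getD i false = false → (Hf s l).getD (i+1) false = l.getD (i+1) false := by
  induction l with
  | nil => intro s i _ _; rfl
  | cons x t ih =>
    intro s i h1 h2
    match i with
    | 0 =>
      have hx : x = false := by simpa using h2
      subst hx
      simpa [Hf] using Hf_getD_zero t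
    | i + 1 =>
      simp only [Hf, List.getD_cons_succ] at h1 h2 ⊢
      exact ih (!x) i h1 h2

theorem Cn_length : ∀ n, ∀ x ∈ Cn n, x.length = n := by
  intro n
  induction n using Nat.strong_induction_on with
  | _ n ih =>
    match n with
    | 0 => intro x hx; simp [Cn] at hx; subst hx; rfl
    | 1 => intro x hx; simp [Cn] at hx; subst hx; rfl
    | n + 2 =>
      intro x hx
      simp only [Cn, Finset.mem_union, Finset.mem_image] at hx
      rcases hx with ⟨w, hw, rfl⟩ | ⟨w, hw, rfl⟩
      · simp [ih (n+1) (by omega) w hw]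
      · simp [ih n (by omega) w hw]

theorem Cn_start (n : ℕ) (x : List Bool) (hx : x ∈ Cn (n+1)) : ∃ t, x = false :: t := by
  match n with
  | 0 =>
    simp [Cn] at hx
    exact ⟨[], hx⟩
  | n + 1 =>
    simp only [Cn, Finset.mem_union, Finset.mem_image] at hx
    rcases hx with ⟨w, _, rfl⟩ | ⟨w, _, rfl⟩
    · exact ⟨w, rfl⟩
    · exact ⟨true :: w, rfl⟩

theorem mem_Cn_cons_false {m : ℕ} {w : List Bool} (hw : w ∈ Cn m) :
    false :: w ∈ Cn (m+1) := by
  match m with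
  | 0 =>
    simp [Cn] at hw
    subst hw
    simp [Cn]
  | m + 1 =>
    show _ ∈ Cn (m+2)
    simp only [Cn, Finset.mem_union, Finset.mem_image]
    exact Or.inl ⟨w, hw, rfl⟩

theorem mem_Cn_cons_ft {m : ℕ} {w : List Bool} (hw : w ∈ Cn m) :
    false :: true :: w ∈ Cn (m+2) := by
  simp only [Cn, Finset.mem_union, Finset.mem_image]
  exact Or.inr ⟨w, hw, rfl⟩

theorem Hf_mem_Cn : ∀ n, ∀ l : List Bool, l.length = n → Hf false l ∈ Cn n := by
  intro n
  induction n using Nat.strong_induction_on with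
  | _ n ih =>
    intro l hl
    match l with
    | [] => simp at hl; subst hl; simp [Hf, Cn]
    | true :: t =>
      have hn : t.length + 1 = n := by simpa using hl
      have hmem := ih t.length (by omega) t rfl
      have : Hf false (true :: t) = false :: Hf false t := by simp [Hf]
      rw [this]
      have := mem_Cn_cons_false hmem
      rwa [hn] at this
    | [false] =>
      have hn : n = 1 := by simpa using hl.symm
      subst hn
      simp [Hf, Cn]
    | false :: true :: t' =>
      have hn : t'.length + 2 = n := by simpa using hl
      have hmem := ih t'.length (by omega) t' rfl
      have : Hf false (false :: true :: t') = false :: true :: Hf false t' := by simp [Hf]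
      rw [this]
      have := mem_Cn_cons_ft hmem
      rwa [hn] at this
    | false :: false :: t' =>
      have hn : t'.length + 2 = n := by simpa using hl
      have hmem := ih (t'.length + 1) (by omega) (false :: t') rfl
      have : Hf false (false :: false :: t') = false :: Hf false (false :: t') := by
        simp [Hf]
      rw [this]
      have := mem_Cn_cons_false hmem
      rwa [show t'.length + 1 + 1 = n by omega] at this

theorem bpair_cons (a : Bool) (l : List Bool) (i : ℕ) : bpair (a :: l) (i+1) = bpair l i := by
  simp [bpair]

theorem S1dist_cons (a : Bool) {n : ℕ} {x y : List Bool} (h : S1dist n x y) :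
    S1dist (n+1) (a :: x) (a :: y) := by
  obtain ⟨i, hi, hc⟩ := h
  exact ⟨i+1, by omega, by simpa [bpair_cons] using hc⟩

theorem Cn_pairwise : ∀ n, ∀ x ∈ Cn n, ∀ y ∈ Cn n, x ≠ y → S1dist n x y := by
  intro n
  induction n using Nat.strong_induction_on with
  | _ n ih =>
    match n with
    | 0 =>
      intro x hx y hy hxy
      simp [Cn] at hx hy
      exact absurd (hx.trans hy.symm) hxy
    | 1 =>
      intro x hx y hy hxy
      simp [Cn] at hx hy
      exact absurd (hx.trans hy.symm) hxy
    | n + 2 =>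
      intro x hx y hy hxy
      simp only [Cn, Finset.mem_union, Finset.mem_image] at hx hy
      rcases hx with ⟨w, hw, rfl⟩ | ⟨w, hw, rfl⟩ <;>
        rcases hy with ⟨v, hv, rfl⟩ | ⟨v, hv, rfl⟩
      · have hwv : w ≠ v := fun h => hxy (by rw [h])
        exact S1dist_cons false (ih (n+1) (by omega) w hw v hv hwv)
      · obtain ⟨t, rfl⟩ := Cn_start n w hw
        exact ⟨0, by omega, Or.inl ⟨rfl, rfl⟩⟩
      · obtain ⟨t, rfl⟩ := Cn_start n v hv
        exact ⟨0, by omega, Or.inr ⟨rfl, rfl⟩⟩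
      · have hwv : w ≠ v := fun h => hxy (by rw [h])
        exact S1dist_cons false (S1dist_cons true (ih n (by omega) w hw v hv hwv))

theorem Cn_card : ∀ n, (Cn n).card = Nat.fib (n+1) := by
  have key : ∀ n, (Cn n).card = Nat.fib (n+1) ∧ (Cn (n+1)).card = Nat.fib (n+2) := by
    intro n
    induction n with
    | zero => exact ⟨rfl, rfl⟩
    | succ m ih =>
      refine ⟨ih.2, ?_⟩
      have hdisj : Disjoint ((Cn (m+1)).image (List.cons false))
          ((Cn m).image (fun l => false :: true :: l)) := by
        rw [Finset.disjoint_left]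
        intro a ha hb
        simp only [Finset.mem_image] at ha hb
        obtain ⟨w, hw, rfl⟩ := ha
        obtain ⟨v, _, hv⟩ := hb
        obtain ⟨t, rfl⟩ := Cn_start m w hw
        simp at hv
      have h1 : ((Cn (m+1)).image (List.cons false)).card = (Cn (m+1)).card :=
        Finset.card_image_of_injective _ List.cons_injective
      have h2 : ((Cn m).image (fun l => false :: true :: l)).card = (Cn m).card := by
        apply Finset.card_image_of_injective
        intro a b h
        injection h with _ h
        injection h
      show (Cn (m+2)).card = Nat.fib (m+3)
      have hu : (Cn (m+2)).card = (Cn (m+1)).card + (Cn m).card := by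
        rw [show Cn (m+2) = (Cn (m+1)).image (List.cons false) ∪
          (Cn m).image (fun l => false :: true :: l) from rfl,
          Finset.card_union_of_disjoint hdisj, h1, h2]
      have hf : Nat.fib (m+3) = Nat.fib (m+1) + Nat.fib (m+2) := by
        rw [show m+3 = (m+1)+2 from rfl, Nat.fib_add_two,
          show m+1+1 = m+2 from rfl]
      rw [hu, ih.1, ih.2, hf]
      omega
  exact fun n => (key n).1

theorem MS1_eq (n : ℕ) : MS1 n = Nat.fib (n+1) := by
  have hmem : Nat.fib (n+1) ∈ {k : ℕ | ∃ B : Set (List Bool),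
      (∀ x ∈ B, x.length = n) ∧ B.Pairwise (S1dist n) ∧ B.ncard = k} := by
    refine ⟨↑(Cn n), ?_, ?_, ?_⟩
    · intro x hx; exact Cn_length n x (by simpa using hx)
    · intro x hx y hy hxy
      exact Cn_pairwise n x (by simpa using hx) y (by simpa using hy) hxy
    · rw [Set.ncard_coe_finset, Cn_card]
  have hub : ∀ k ∈ {k : ℕ | ∃ B : Set (List Bool),
      (∀ x ∈ B, x.length = n) ∧ B.Pairwise (S1dist n) ∧ B.ncard = k},
      k ≤ Nat.fib (n+1) := by
    rintro k ⟨B, hlen, hpair, rfl⟩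
    have key : ∀ (i : ℕ) (a b : List Bool), Hf false a = Hf false b →
        a.getD i false = false → b.getD i false = false →
        a.getD (i+1) false = false → b.getD (i+1) false = true → False := by
      intro i a b hab ha0 hb0 ha1 hb1
      cases hfa : (Hf false a).getD i false with
      | true =>
        rw [Hf_getD_true a false i hfa] at ha0
        exact absurd ha0 (by simp)
      | false =>
        have e1 := Hf_getD_agree a false i hfa ha0
        have e2 := Hf_getD_agree b false i (hab ▸ hfa) hb0
        rw [hab] at e1
        rw [e1, ha1] at e2
        rw [hb1] at e2
        exact absurd e2 (by simp)
    have h1 : B.ncard ≤ (↑(Cn n) : Set (List Bool)).ncard := by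
      apply Set.ncard_le_ncard_of_injOn (fun x => Hf false x)
      · intro a ha
        simpa using Hf_mem_Cn n a (hlen a ha)
      · intro a ha b hb hab
        by_contra hne
        obtain ⟨i, _, hc⟩ := hpair ha hb hne
        rcases hc with ⟨hxa, hxb⟩ | ⟨hxa, hxb⟩
        · simp only [bpair, Prod.mk.injEq] at hxa hxb
          exact key i a b hab hxa.1 hxb.1 hxa.2 hxb.2
        · simp only [bpair, Prod.mk.injEq] at hxa hxb
          exact key i b a hab.symm hxb.1 hxa.1 hxb.2 hxa.2
    calc B.ncard ≤ (↑(Cn n) : Set (List Bool)).ncard := h1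
      _ = Nat.fib (n+1) := by rw [Set.ncard_coe_finset, Cn_card]
  exact IsGreatest.csSup_eq ⟨hmem, hub⟩

/-! ### Analytic part -/

open Real goldenRatio in
theorem fib_le_gold_pow : ∀ n : ℕ, (Nat.fib (n+1) : ℝ) ≤ goldenRatio ^ n := by
  intro n
  induction n using Nat.strong_induction_on with
  | _ n ih =>
    match n with
    | 0 => norm_num
    | 1 =>
      have h1 : (Nat.fib 2 : ℝ) = 1 := by norm_num
      calc (Nat.fib (1+1) : ℝ) = 1 := h1
        _ ≤ goldenRatio ^ 1 := by rw [pow_one]; linarith [one_lt_goldenRatio]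
    | n + 2 =>
      have i1 := ih n (by omega)
      have i2 := ih (n+1) (by omega)
      have hfib : (Nat.fib (n+3) : ℝ) = Nat.fib (n+1) + Nat.fib (n+2) := by
        rw [show n + 3 = (n+1) + 2 from rfl, Nat.fib_add_two]
        push_cast; ring
      have hpow : goldenRatio ^ (n+2) = goldenRatio ^ n + goldenRatio ^ (n+1) := by
        have : goldenRatio ^ (n+2) = goldenRatio ^ n * goldenRatio ^ 2 := by ring
        rw [this, goldenRatio_sq]; ring
      rw [hfib, hpow]
      linarith

open Real goldenRatio in
theorem gold_pow_le_fib : ∀ n : ℕ, goldenRatio ^ n ≤ (Nat.fib (n+2) : ℝ) := by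
  intro n
  induction n using Nat.strong_induction_on with
  | _ n ih =>
    match n with
    | 0 => norm_num
    | 1 =>
      have h1 : (Nat.fib 3 : ℝ) = 2 := by norm_num
      calc goldenRatio ^ 1 ≤ 2 := by rw [pow_one]; linarith [goldenRatio_lt_two]
        _ = (Nat.fib (1+2) : ℝ) := h1.symm
    | n + 2 =>
      have i1 := ih n (by omega)
      have i2 := ih (n+1) (by omega)
      have hfib : (Nat.fib (n+4) : ℝ) = Nat.fib (n+2) + Nat.fib (n+3) := by
        rw [show n + 4 = (n+2) + 2 from rfl, Nat.fib_add_two]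
        push_cast; ring
      have hpow : goldenRatio ^ (n+2) = goldenRatio ^ n + goldenRatio ^ (n+1) := by
        have : goldenRatio ^ (n+2) = goldenRatio ^ n * goldenRatio ^ 2 := by ring
        rw [this, goldenRatio_sq]; ring
      rw [hfib, hpow]
      linarith

open Real goldenRatio in
theorem tendsto_logb_fib :
    Tendsto (fun n : ℕ => Real.logb 2 (Nat.fib (n+1)) / n) atTop
      (nhds (Real.logb 2 goldenRatio)) := by
  set L := Real.logb 2 goldenRatio with hLdef
  have hL : 0 ≤ L := Real.logb_nonneg (by norm_num) (le_of_lt one_lt_goldenRatio)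
  apply tendsto_of_tendsto_of_tendsto_of_le_of_le'
    (g := fun n : ℕ => ((n : ℝ) - 1) / n * L) (h := fun _ : ℕ => L)
  · have h2 : Tendsto (fun n : ℕ => 1 - 1 / (n : ℝ)) atTop (nhds 1) := by
      simpa using (tendsto_const_nhds (x := (1:ℝ))).sub tendsto_one_div_atTop_nhds_zero_nat
    have h1 : Tendsto (fun n : ℕ => ((n : ℝ) - 1) / n) atTop (nhds 1) := by
      apply h2.congr'
      filter_upwards [eventually_ge_atTop 1] with n hn
      have hn' : (n : ℝ) ≠ 0 := by positivity
      field_simp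
    simpa using h1.mul_const L
  · exact tendsto_const_nhds
  · filter_upwards [eventually_ge_atTop 1] with n hn
    have hn0 : (0 : ℝ) < n := by positivity
    have hfib : goldenRatio ^ (n - 1) ≤ (Nat.fib (n+1) : ℝ) := by
      have := gold_pow_le_fib (n - 1)
      rwa [show n - 1 + 2 = n + 1 by omega] at this
    have hmono : Real.logb 2 (goldenRatio ^ (n-1)) ≤ Real.logb 2 (Nat.fib (n+1)) :=
      Real.logb_le_logb_of_le (by norm_num) (pow_pos goldenRatio_pos _) hfib
    rw [Real.logb_pow] at hmono
    have hcast : ((n - 1 : ℕ) : ℝ) = (n : ℝ) - 1 := by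
      have : (1 : ℕ) ≤ n := hn
      push_cast [this]; ring
    rw [hcast] at hmono
    rw [div_mul_eq_mul_div]
    gcongr
  · filter_upwards [eventually_ge_atTop 1] with n hn
    have hn0 : (0 : ℝ) < n := by positivity
    have hfibpos : (0 : ℝ) < (Nat.fib (n+1) : ℝ) := by
      exact_mod_cast Nat.fib_pos.mpr (by omega)
    have hmono : Real.logb 2 (Nat.fib (n+1)) ≤ Real.logb 2 (goldenRatio ^ n) :=
      Real.logb_le_logb_of_le (by norm_num) hfibpos (fib_le_gold_pow n)
    rw [Real.logb_pow] at hmono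
    calc Real.logb 2 (Nat.fib (n+1)) / n ≤ ((n : ℝ) * L) / n := by gcongr
      _ = L := by field_simp

/-- `C_M(S₁) = log₂((1+√5)/2)`: `M(S₁,n)` grows like the Fibonacci numbers up to
polynomial factors. -/
theorem stmt15 :
    Filter.limsup (fun n : ℕ => Real.logb 2 (MS1 n) / n) atTop =
      Real.logb 2 ((1 + Real.sqrt 5) / 2) ∧
    (∃ c d : ℕ, 0 < c ∧ ∀ n : ℕ, 1 ≤ n →
      Nat.fib n ≤ MS1 n * (c * n ^ d) ∧ MS1 n ≤ Nat.fib n * (c * n ^ d)) := by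
  constructor
  · have he : (fun n : ℕ => Real.logb 2 (MS1 n) / n)
        = fun n : ℕ => Real.logb 2 (Nat.fib (n+1)) / n := by
      funext n; rw [MS1_eq]
    rw [he]
    exact tendsto_logb_fib.limsup_eq
  · refine ⟨2, 0, by norm_num, fun n hn => ?_⟩
    rw [MS1_eq]
    obtain ⟨m, rfl⟩ := Nat.exists_eq_add_of_le hn
    have h1 : Nat.fib (m + 2) = Nat.fib m + Nat.fib (m + 1) := Nat.fib_add_two
    have h2 : Nat.fib m ≤ Nat.fib (m + 1) := Nat.fib_le_fib_succ
    constructor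
    · have : Nat.fib (1 + m) ≤ Nat.fib (1 + m + 1) := Nat.fib_le_fib_succ
      simpa using this.trans (Nat.le_mul_of_pos_right _ (by norm_num))
    · simp only [pow_zero, mul_one]
      have e1 : 1 + m = m + 1 := by omega
      rw [e1]
      have h3 : Nat.fib (m+1+1) = Nat.fib (m+2) := rfl
      rw [h3]
      omega
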